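/- Let Ω = {w ∈ ℂ : w ≠ 0, w ∉ I_p, i·w ∉ I_q} and define B_X(w) = (α+α')/2 + i(β+β')/2 + (√(D_p(w)) + √(D_q(i·w)))/(2w) for w ∈ Ω. Then: (1) B_X is continuous on Ω and analytic on {w ∈ ℂ : w ≠ 0, w ∉ cl(I_p), i·w ∉ cl(I_q)}; (2) for every w₀ ∈ ℂ with w₀ ∈ I_p and i·w₀ ∈ I_q, the limit of B_X(w) as w → w₀ within Ω does not exist (there is no L ∈ ℂ such that B_X(w) → L as w → w₀ within Ω); (3) w·B_X(w) → 1 as w → 0 within Ω. -/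

import Mathlib

open Set Filter

lemma Fre' (A c d : ℝ) (z : ℂ) :
    ((((A:ℂ))*z + (c:ℂ))^2 + (d:ℂ)).re = (A*z.re+c)^2 - A^2*z.im^2 + d := by
  simp [pow_two, Complex.add_re, Complex.mul_re, Complex.add_im, Complex.mul_im]
  ring

lemma Fim' (A c d : ℝ) (z : ℂ) :
    ((((A:ℂ))*z + (c:ℂ))^2 + (d:ℂ)).im = 2*(A*z.re+c)*(A*z.im) := by
  simp [pow_two, Complex.add_re, Complex.mul_re, Complex.add_im, Complex.mul_im]
  ring

lemma classify_lt (A c d : ℝ) (hd : 0 < d) (z : ℂ) :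
    (((((A:ℂ))*z + (c:ℂ))^2 + (d:ℂ)).re < 0 ∧ ((((A:ℂ))*z + (c:ℂ))^2 + (d:ℂ)).im = 0)
    ↔ (A*z.re + c = 0 ∧ d < A^2*z.im^2) := by
  rw [Fre', Fim']
  constructor
  · rintro ⟨h1, h2⟩
    have h2' : A*z.re + c = 0 ∨ A*z.im = 0 := by
      rcases mul_eq_zero.mp h2 with h | h
      · rcases mul_eq_zero.mp h with h | h
        · norm_num at h
        · exact Or.inl h
      · exact Or.inr h
    rcases h2' with h | h
    · exact ⟨h, by nlinarith⟩
    · exfalso; nlinarith [sq_nonneg (A*z.re+c), sq_nonneg (A*z.im), _root_.sq_abs (A*z.im)]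
  · rintro ⟨h1, h2⟩
    constructor
    · nlinarith
    · rw [h1]; ring

lemma classify_le (A c d : ℝ) (hd : 0 < d) (z : ℂ) :
    (((((A:ℂ))*z + (c:ℂ))^2 + (d:ℂ)).re ≤ 0 ∧ ((((A:ℂ))*z + (c:ℂ))^2 + (d:ℂ)).im = 0)
    ↔ (A*z.re + c = 0 ∧ d ≤ A^2*z.im^2) := by
  rw [Fre', Fim']
  constructor
  · rintro ⟨h1, h2⟩
    have h2' : A*z.re + c = 0 ∨ A*z.im = 0 := by
      rcases mul_eq_zero.mp h2 with h | h
      · rcases mul_eq_zero.mp h with h | h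
        · norm_num at h
        · exact Or.inl h
      · exact Or.inr h
    rcases h2' with h | h
    · exact ⟨h, by nlinarith⟩
    · exfalso; nlinarith [sq_nonneg (A*z.re+c)]
  · rintro ⟨h1, h2⟩
    exact ⟨by nlinarith, by rw [h1]; ring⟩

lemma sq_trans_lt (e A y : ℝ) (he : 0 ≤ e) (hA : A ≠ 0) :
    2*Real.sqrt e/|A| < |y| ↔ 4*e < A^2*y^2 := by
  have hA' : 0 < |A| := abs_pos.mpr hA
  rw [div_lt_iff₀ hA']
  constructor
  · intro h
    nlinarith [Real.sq_sqrt he, abs_nonneg y, abs_nonneg A, _root_.sq_abs y, _root_.sq_abs A,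
      Real.sqrt_nonneg e]
  · intro h
    nlinarith [Real.sq_sqrt he, abs_nonneg y, abs_nonneg A, _root_.sq_abs y, _root_.sq_abs A,
      Real.sqrt_nonneg e, abs_mul_abs_self y, abs_mul_abs_self A,
      mul_nonneg (abs_nonneg y) (abs_nonneg A)]

lemma sq_trans_le (e A y : ℝ) (he : 0 ≤ e) (hA : A ≠ 0) :
    2*Real.sqrt e/|A| ≤ |y| ↔ 4*e ≤ A^2*y^2 := by
  have hA' : 0 < |A| := abs_pos.mpr hA
  rw [div_le_iff₀ hA']
  constructor
  · intro h
    nlinarith [Real.sq_sqrt he, abs_nonneg y, abs_nonneg A, _root_.sq_abs y, _root_.sq_abs A,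
      Real.sqrt_nonneg e]
  · intro h
    nlinarith [Real.sq_sqrt he, abs_nonneg y, abs_nonneg A, _root_.sq_abs y, _root_.sq_abs A,
      Real.sqrt_nonneg e, mul_nonneg (abs_nonneg y) (abs_nonneg A)]

lemma closure_sub (r t : ℝ) (ht : 0 < t) :
    {z : ℂ | z.re = r ∧ t ≤ |z.im|} ⊆ closure {z : ℂ | z.re = r ∧ t < |z.im|} := by
  rintro z ⟨hre, him⟩
  have hz : z.im ≠ 0 := fun h => by simp [h] at him; linarith
  set σ : ℝ := if 0 ≤ z.im then 1 else -1 with hσ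
  have key : Tendsto (fun ε : ℝ => z + (σ*ε)*Complex.I) (nhdsWithin 0 (Ioi 0)) (nhds z) := by
    have : Tendsto (fun ε : ℝ => z + (σ*ε)*Complex.I) (nhds 0) (nhds (z + (σ*0)*Complex.I)) := by
      exact Filter.Tendsto.add tendsto_const_nhds (by exact Continuous.tendsto (by continuity) 0)
    simpa using this.mono_left nhdsWithin_le_nhds
  refine mem_closure_of_tendsto key ?_
  filter_upwards [self_mem_nhdsWithin] with ε (hε : 0 < ε)
  constructor
  · simp [hre]
  · have h1 : (z + (σ*ε)*Complex.I).im = z.im + σ*ε := by simp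
    rw [h1]
    rcases le_or_gt 0 z.im with h | h
    · have : σ = 1 := by simp [hσ, h]
      rw [this]
      have : |z.im + 1*ε| = |z.im| + ε := by
        rw [_root_.abs_of_nonneg (by positivity), _root_.abs_of_nonneg h]; ring
      rw [this]; linarith
    · have : σ = -1 := by simp [hσ, not_le.mpr h]
      rw [this]
      have h2 : z.im + (-1)*ε < 0 := by linarith
      have : |z.im + (-1)*ε| = |z.im| + ε := by
        rw [_root_.abs_of_neg h2, _root_.abs_of_neg h]; ring
      rw [this]; linarith

lemma re_trans (A c x : ℝ) (hA : A ≠ 0) : x = -c/A ↔ A*x + c = 0 := by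
  rw [eq_div_iff hA]
  constructor <;> intro h <;> linear_combination h

lemma cpow_half_tendsto (x : ℝ) (hx : x < 0) (s : ℝ) (hs : s = 1 ∨ s = -1) :
    Tendsto (fun z : ℂ => z ^ ((1:ℂ)/2)) (nhdsWithin (x:ℂ) {z : ℂ | 0 < s * z.im})
      (nhds ((s:ℂ) * Complex.I * (Real.sqrt (-x) : ℝ))) := by
  have hxre : (x:ℂ).re < 0 := by simpa using hx
  have hxim : (x:ℂ).im = 0 := by simp
  have habs : ‖(x:ℂ)‖ = -x := by
    rw [Complex.norm_real, Real.norm_eq_abs, _root_.abs_of_neg hx]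
  have hlog : Tendsto Complex.log (nhdsWithin (x:ℂ) {z : ℂ | 0 < s * z.im})
      (nhds (((Real.log (-x) : ℝ) : ℂ) + (s:ℂ) * Real.pi * Complex.I)) := by
    rcases hs with rfl | rfl
    · have h := Complex.tendsto_log_nhdsWithin_im_nonneg_of_re_neg_of_im_zero hxre hxim
      rw [habs] at h
      have hmono : {z : ℂ | 0 < (1:ℝ) * z.im} ⊆ {z : ℂ | 0 ≤ z.im} := by
        intro z hz; simp only [mem_setOf_eq] at hz ⊢; linarith
      have := h.mono_left (nhdsWithin_mono _ hmono)
      convert this using 2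
      push_cast; ring
    · have h := Complex.tendsto_log_nhdsWithin_im_neg_of_re_neg_of_im_zero hxre hxim
      rw [habs] at h
      have hmono : {z : ℂ | 0 < (-1:ℝ) * z.im} ⊆ {z : ℂ | z.im < 0} := by
        intro z hz; simp only [mem_setOf_eq] at hz ⊢; linarith
      have := h.mono_left (nhdsWithin_mono _ hmono)
      convert this using 2
      push_cast; ring
  have hexp : Tendsto (fun z : ℂ => Complex.exp (Complex.log z * ((1:ℂ)/2)))
      (nhdsWithin (x:ℂ) {z : ℂ | 0 < s * z.im})
      (nhds (Complex.exp ((((Real.log (-x) : ℝ):ℂ) + (s:ℂ) * Real.pi * Complex.I) * ((1:ℂ)/2)))) :=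
    (Complex.continuous_exp.tendsto _).comp (hlog.mul_const _)
  have hval : Complex.exp ((((Real.log (-x) : ℝ):ℂ) + (s:ℂ) * Real.pi * Complex.I) * ((1:ℂ)/2))
      = (s:ℂ) * Complex.I * (Real.sqrt (-x) : ℝ) := by
    rw [add_mul, Complex.exp_add]
    have h1 : (((Real.log (-x) : ℝ):ℂ)) * ((1:ℂ)/2) = ((Real.log (-x) / 2 : ℝ) : ℂ) := by
      push_cast; ring
    rw [h1, ← Complex.ofReal_exp]
    have h2 : Real.exp (Real.log (-x) / 2) = Real.sqrt (-x) := by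
      rw [← Real.log_sqrt (by linarith)]
      exact Real.exp_log (Real.sqrt_pos.mpr (by linarith))
    rw [h2]
    have h3 : ((s:ℂ) * Real.pi * Complex.I) * ((1:ℂ)/2) = (((s * (Real.pi/2) : ℝ)):ℂ) * Complex.I := by
      push_cast; ring
    rw [h3, Complex.exp_mul_I, ← Complex.ofReal_cos, ← Complex.ofReal_sin]
    rcases hs with rfl | rfl
    · rw [show ((1:ℝ) * (Real.pi/2) : ℝ) = (Real.pi/2 : ℝ) by ring,
        Real.cos_pi_div_two, Real.sin_pi_div_two]
      push_cast; ring
    · rw [show ((-1:ℝ) * (Real.pi/2) : ℝ) = -(Real.pi/2 : ℝ) by ring,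
        Real.cos_neg, Real.sin_neg, Real.cos_pi_div_two, Real.sin_pi_div_two]
      push_cast; ring
  rw [← hval]
  refine hexp.congr' ?_
  filter_upwards [self_mem_nhdsWithin] with z hz
  have hzne : z ≠ 0 := by
    intro h
    rw [h] at hz
    simp only [mem_setOf_eq, Complex.zero_im, mul_zero] at hz
    exact lt_irrefl 0 hz
  rw [Complex.cpow_def_of_ne_zero hzne]

lemma dir_tendsto (A c d : ℝ) (hd : 0 < d) (z₀ v : ℂ)
    (h1 : A * z₀.re + c = 0) (h2 : d < A^2 * z₀.im^2)
    (s : ℝ) (hs : s = 1 ∨ s = -1) (hsgn : 0 < s * (v.re * z₀.im)) :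
    Tendsto (fun ε : ℝ => (((A:ℂ)*(z₀ + v*(ε:ℂ)) + (c:ℂ))^2 + (d:ℂ)) ^ ((1:ℂ)/2))
      (nhdsWithin 0 (Ioi (0:ℝ)))
      (nhds ((s:ℂ) * Complex.I * (Real.sqrt (A^2*z₀.im^2 - d) : ℝ))) := by
  have hA : A ≠ 0 := by
    intro h; rw [h] at h2; simp at h2; linarith
  set x : ℝ := d - A^2*z₀.im^2 with hx
  have hxneg : x < 0 := by rw [hx]; linarith
  have hFz₀ : (((A:ℂ)*z₀ + (c:ℂ))^2 + (d:ℂ)) = (x:ℂ) := by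
    apply Complex.ext
    · rw [Fre', h1, Complex.ofReal_re, hx]; ring
    · rw [Fim', h1, Complex.ofReal_im]; ring
  have hpath : Tendsto (fun ε : ℝ => (((A:ℂ)*(z₀ + v*(ε:ℂ)) + (c:ℂ))^2 + (d:ℂ)))
      (nhdsWithin 0 (Ioi (0:ℝ))) (nhds (x:ℂ)) := by
    have hC : Continuous (fun ε : ℝ => (((A:ℂ)*(z₀ + v*(ε:ℂ)) + (c:ℂ))^2 + (d:ℂ))) := by
      continuity
    have := (hC.tendsto 0).mono_left (nhdsWithin_le_nhds (s := Ioi (0:ℝ)))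
    have h0 : (((A:ℂ)*(z₀ + v*((0:ℝ):ℂ)) + (c:ℂ))^2 + (d:ℂ)) = (x:ℂ) := by
      rw [← hFz₀]; norm_num
    rwa [h0] at this
  have him : ∀ᶠ (ε : ℝ) in nhdsWithin 0 (Ioi (0:ℝ)),
      (0:ℝ) < s * ((((A:ℂ)*(z₀ + v*(ε:ℂ)) + (c:ℂ))^2 + (d:ℂ))).im := by
    have hgcont : Continuous (fun ε : ℝ => 2*A^2*(s*(v.re*z₀.im)) + 2*A^2*(s*v.re*v.im)*ε) := by
      continuity
    have hg0 : (0:ℝ) < 2*A^2*(s*(v.re*z₀.im)) + 2*A^2*(s*v.re*v.im)*0 := by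
      have hA2 : 0 < A^2 := by positivity
      nlinarith
    have hev : ∀ᶠ (ε : ℝ) in nhdsWithin 0 (Ioi (0:ℝ)),
        0 < 2*A^2*(s*(v.re*z₀.im)) + 2*A^2*(s*v.re*v.im)*ε := by
      have := (hgcont.tendsto 0).mono_left (nhdsWithin_le_nhds (s := Ioi (0:ℝ)))
      exact this.eventually (eventually_gt_nhds hg0)
    filter_upwards [hev, self_mem_nhdsWithin] with ε hg (hε : 0 < ε)
    have hid : s * ((((A:ℂ)*(z₀ + v*(ε:ℂ)) + (c:ℂ))^2 + (d:ℂ))).im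
        = ε * (2*A^2*(s*(v.re*z₀.im)) + 2*A^2*(s*v.re*v.im)*ε) := by
      rw [Fim']
      simp only [Complex.add_re, Complex.add_im, Complex.mul_re, Complex.mul_im,
        Complex.ofReal_re, Complex.ofReal_im]
      ring_nf
      linear_combination (2*s*A*(z₀.im + v.im*ε)) * h1
    rw [hid]
    positivity
  have hcomp : Tendsto (fun ε : ℝ => (((A:ℂ)*(z₀ + v*(ε:ℂ)) + (c:ℂ))^2 + (d:ℂ)))
      (nhdsWithin 0 (Ioi (0:ℝ))) (nhdsWithin (x:ℂ) {z : ℂ | 0 < s * z.im}) :=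
    tendsto_nhdsWithin_iff.mpr ⟨hpath, him⟩
  have := (cpow_half_tendsto x hxneg s hs).comp hcomp
  have hxx : -x = A^2*z₀.im^2 - d := by rw [hx]; ring
  rw [hxx] at this
  exact this

theorem stmt9 (a b α α' β β' : ℝ)
    (ha : a ∈ Ioo (0 : ℝ) 1) (hb : b ∈ Ioo (0 : ℝ) 1) (hαα : α ≠ α') (hββ : β ≠ β')
    (𝒜 ℬ : ℝ) (h𝒜 : 𝒜 = α' - α) (hℬ : ℬ = β' - β)
    (Dp Dq : ℂ → ℂ)
    (hDp : ∀ w : ℂ, Dp w = ((𝒜 : ℂ) * w + ((1 - 2 * a : ℝ) : ℂ)) ^ 2 + ((4 * a * (1 - a) : ℝ) : ℂ))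
    (hDq : ∀ w : ℂ, Dq w = ((ℬ : ℂ) * w + ((1 - 2 * b : ℝ) : ℂ)) ^ 2 + ((4 * b * (1 - b) : ℝ) : ℂ))
    (Ip Iq : Set ℂ)
    (hIp : Ip = {w : ℂ | w.re = -(1 - 2 * a) / 𝒜 ∧ 2 * Real.sqrt (a * (1 - a)) / |𝒜| < |w.im|})
    (hIq : Iq = {w : ℂ | w.re = -(1 - 2 * b) / ℬ ∧ 2 * Real.sqrt (b * (1 - b)) / |ℬ| < |w.im|})
    (Ω : Set ℂ) (hΩ : Ω = {w : ℂ | w ≠ 0 ∧ w ∉ Ip ∧ Complex.I * w ∉ Iq})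
    (BX : ℂ → ℂ)
    (hBX : ∀ w : ℂ, BX w = (((α + α') / 2 : ℝ) : ℂ) + Complex.I * (((β + β') / 2 : ℝ) : ℂ) +
      ((Dp w) ^ ((1 : ℂ) / 2) + (Dq (Complex.I * w)) ^ ((1 : ℂ) / 2)) / (2 * w)) :
    -- (1) continuity and analyticity
    ContinuousOn BX Ω
    ∧ AnalyticOnNhd ℂ BX {w : ℂ | w ≠ 0 ∧ w ∉ closure Ip ∧ Complex.I * w ∉ closure Iq}
    -- (2) no limit at points of I_p whose rotate lies in I_q
    ∧ (∀ w₀ : ℂ, w₀ ∈ Ip → Complex.I * w₀ ∈ Iq →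
        ¬ ∃ L : ℂ, Tendsto BX (nhdsWithin w₀ Ω) (nhds L))
    -- (3) w·B_X(w) → 1 as w → 0
    ∧ Tendsto (fun w => w * BX w) (nhdsWithin 0 Ω) (nhds 1) := by
  obtain ⟨ha0, ha1⟩ := ha
  obtain ⟨hb0, hb1⟩ := hb
  have h𝒜ne : 𝒜 ≠ 0 := by rw [h𝒜]; exact sub_ne_zero.mpr (Ne.symm hαα)
  have hℬne : ℬ ≠ 0 := by rw [hℬ]; exact sub_ne_zero.mpr (Ne.symm hββ)
  have hdp : (0:ℝ) < 4*a*(1-a) := by nlinarith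
  have hdq : (0:ℝ) < 4*b*(1-b) := by nlinarith
  -- membership characterizations
  have hmemIp : ∀ z : ℂ, z ∈ Ip ↔ (𝒜*z.re + (1-2*a) = 0 ∧ 4*a*(1-a) < 𝒜^2*z.im^2) := by
    intro z
    rw [hIp]
    simp only [mem_setOf_eq]
    rw [show (4:ℝ)*a*(1-a) = 4*(a*(1-a)) by ring]
    exact and_congr (re_trans 𝒜 (1-2*a) z.re h𝒜ne)
      (sq_trans_lt (a*(1-a)) 𝒜 z.im (by nlinarith) h𝒜ne)
  have hmemIq : ∀ z : ℂ, z ∈ Iq ↔ (ℬ*z.re + (1-2*b) = 0 ∧ 4*b*(1-b) < ℬ^2*z.im^2) := by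
    intro z
    rw [hIq]
    simp only [mem_setOf_eq]
    rw [show (4:ℝ)*b*(1-b) = 4*(b*(1-b)) by ring]
    exact and_congr (re_trans ℬ (1-2*b) z.re hℬne)
      (sq_trans_lt (b*(1-b)) ℬ z.im (by nlinarith) hℬne)
  have hclosIp : ∀ z : ℂ, (𝒜*z.re + (1-2*a) = 0 ∧ 4*a*(1-a) ≤ 𝒜^2*z.im^2) → z ∈ closure Ip := by
    rintro z ⟨h1, h2⟩
    rw [hIp]
    apply closure_sub (-(1-2*a)/𝒜) (2*Real.sqrt (a*(1-a))/|𝒜|)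
      (by
        have : (0:ℝ) < Real.sqrt (a*(1-a)) := Real.sqrt_pos.mpr (by nlinarith)
        have : (0:ℝ) < |𝒜| := abs_pos.mpr h𝒜ne
        positivity)
    refine ⟨(re_trans 𝒜 (1-2*a) z.re h𝒜ne).mpr h1, ?_⟩
    rw [sq_trans_le (a*(1-a)) 𝒜 z.im (by nlinarith) h𝒜ne]
    linarith [h2]
  have hclosIq : ∀ z : ℂ, (ℬ*z.re + (1-2*b) = 0 ∧ 4*b*(1-b) ≤ ℬ^2*z.im^2) → z ∈ closure Iq := by
    rintro z ⟨h1, h2⟩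
    rw [hIq]
    apply closure_sub (-(1-2*b)/ℬ) (2*Real.sqrt (b*(1-b))/|ℬ|)
      (by
        have : (0:ℝ) < Real.sqrt (b*(1-b)) := Real.sqrt_pos.mpr (by nlinarith)
        have : (0:ℝ) < |ℬ| := abs_pos.mpr hℬne
        positivity)
    refine ⟨(re_trans ℬ (1-2*b) z.re hℬne).mpr h1, ?_⟩
    rw [sq_trans_le (b*(1-b)) ℬ z.im (by nlinarith) hℬne]
    linarith [h2]
  -- slit plane conditions
  have hslitp : ∀ z : ℂ, z ∉ Ip → (0 ≤ (Dp z).re ∨ (Dp z).im ≠ 0) := by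
    intro z hz
    by_contra h
    push_neg at h
    obtain ⟨h1, h2⟩ := h
    exact hz ((hmemIp z).mpr (((classify_lt 𝒜 (1-2*a) (4*a*(1-a)) hdp z).mp
      (by rw [hDp z] at h1 h2; exact ⟨h1, h2⟩))))
  have hslitq : ∀ z : ℂ, z ∉ Iq → (0 ≤ (Dq z).re ∨ (Dq z).im ≠ 0) := by
    intro z hz
    by_contra h
    push_neg at h
    obtain ⟨h1, h2⟩ := h
    exact hz ((hmemIq z).mpr (((classify_lt ℬ (1-2*b) (4*b*(1-b)) hdq z).mp
      (by rw [hDq z] at h1 h2; exact ⟨h1, h2⟩))))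
  have hslitp' : ∀ z : ℂ, z ∉ closure Ip → Dp z ∈ Complex.slitPlane := by
    intro z hz
    rw [Complex.mem_slitPlane_iff]
    by_contra h
    push_neg at h
    obtain ⟨h1, h2⟩ := h
    exact hz (hclosIp z ((classify_le 𝒜 (1-2*a) (4*a*(1-a)) hdp z).mp
      (by rw [hDp z] at h1 h2; exact ⟨h1, h2⟩)))
  have hslitq' : ∀ z : ℂ, z ∉ closure Iq → Dq z ∈ Complex.slitPlane := by
    intro z hz
    rw [Complex.mem_slitPlane_iff]
    by_contra h
    push_neg at h
    obtain ⟨h1, h2⟩ := h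
    exact hz (hclosIq z ((classify_le ℬ (1-2*b) (4*b*(1-b)) hdq z).mp
      (by rw [hDq z] at h1 h2; exact ⟨h1, h2⟩)))
  have hDpf : Dp = fun w => ((𝒜 : ℂ) * w + ((1 - 2 * a : ℝ) : ℂ)) ^ 2 + ((4 * a * (1 - a) : ℝ) : ℂ) :=
    funext hDp
  have hDqf : Dq = fun w => ((ℬ : ℂ) * w + ((1 - 2 * b : ℝ) : ℂ)) ^ 2 + ((4 * b * (1 - b) : ℝ) : ℂ) :=
    funext hDq
  have hBXf : BX = fun w => (((α + α') / 2 : ℝ) : ℂ) + Complex.I * (((β + β') / 2 : ℝ) : ℂ) +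
      ((Dp w) ^ ((1 : ℂ) / 2) + (Dq (Complex.I * w)) ^ ((1 : ℂ) / 2)) / (2 * w) := funext hBX
  have hDpc : Continuous Dp := by rw [hDpf]; fun_prop
  have hDqc : Continuous Dq := by rw [hDqf]; fun_prop
  have hhalf : (0:ℝ) < ((1:ℂ)/2).re := by norm_num
  refine ⟨?_, ?_, ?_, ?_⟩
  -- Part (1a): continuity
  · intro w hw
    rw [hΩ] at hw
    obtain ⟨hw0, hwp, hwq⟩ := hw
    apply ContinuousAt.continuousWithinAt
    rw [hBXf]
    apply ContinuousAt.add continuousAt_const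
    apply ContinuousAt.div
    · apply ContinuousAt.add
      · exact ContinuousAt.comp
          (Complex.continuousAt_cpow_const_of_re_pos (hslitp w hwp) hhalf)
          hDpc.continuousAt
      · have hin : ContinuousAt (fun w : ℂ => Dq (Complex.I * w)) w :=
          (hDqc.comp (by fun_prop : Continuous fun w : ℂ => Complex.I*w)).continuousAt
        exact ContinuousAt.comp (g := fun z : ℂ => z ^ ((1:ℂ)/2))
          (f := fun w : ℂ => Dq (Complex.I*w)) (x := w)
          (Complex.continuousAt_cpow_const_of_re_pos (hslitq _ hwq) hhalf) hin
    · exact (continuous_const.mul continuous_id).continuousAt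
    · simpa using hw0
  -- Part (1b): analyticity
  · have hSopen : IsOpen {w : ℂ | w ≠ 0 ∧ w ∉ closure Ip ∧ Complex.I * w ∉ closure Iq} := by
      have heq : {w : ℂ | w ≠ 0 ∧ w ∉ closure Ip ∧ Complex.I * w ∉ closure Iq}
          = {(0:ℂ)}ᶜ ∩ ((closure Ip)ᶜ ∩ ((fun w => Complex.I*w) ⁻¹' (closure Iq)ᶜ)) := by
        ext w; simp [mem_compl_iff, mem_inter_iff]
      rw [heq]
      exact isOpen_compl_singleton.inter
        ((isClosed_closure.isOpen_compl).inter
          (((continuous_const.mul continuous_id).isOpen_preimage _ isClosed_closure.isOpen_compl)))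
    apply DifferentiableOn.analyticOnNhd _ hSopen
    intro w hw
    obtain ⟨hw0, hwp, hwq⟩ := hw
    apply DifferentiableAt.differentiableWithinAt
    rw [hBXf]
    apply DifferentiableAt.add (differentiableAt_const _)
    apply DifferentiableAt.div
    · apply DifferentiableAt.add
      · have hdiff : DifferentiableAt ℂ Dp w := by rw [hDpf]; fun_prop
        exact hdiff.cpow (differentiableAt_const _) (hslitp' w hwp)
      · have hdiff : DifferentiableAt ℂ (fun w : ℂ => Dq (Complex.I*w)) w := by
          rw [hDqf]; fun_prop
        exact hdiff.cpow (differentiableAt_const _) (hslitq' _ hwq)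
    · exact (differentiable_const _ |>.mul differentiable_id).differentiableAt
    · simpa using hw0
  -- Part (2): no limit
  · rintro w₀ hp hq ⟨L, hL⟩
    obtain ⟨h1p, h2p⟩ := (hmemIp w₀).mp hp
    obtain ⟨h1q, h2q⟩ := (hmemIq (Complex.I*w₀)).mp hq
    have hw₀im : w₀.im ≠ 0 := by
      intro h; rw [h] at h2p; simp at h2p; nlinarith
    have hIw₀im : (Complex.I*w₀).im ≠ 0 := by
      intro h; rw [h] at h2q; simp at h2q; nlinarith
    have hw₀re : w₀.re ≠ 0 := by simpa using hIw₀im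
    have hw₀ : w₀ ≠ 0 := fun h => hw₀im (by rw [h]; simp)
    have h2w : (2*w₀ : ℂ) ≠ 0 := by simpa using hw₀
    have h1q' : ℬ*(-w₀.im) + (1-2*b) = 0 := by simpa using h1q
    set σ1 : ℝ := if 0 < w₀.im then 1 else -1 with hσ1def
    set σ2 : ℝ := if 0 < w₀.re then 1 else -1 with hσ2def
    have hσ1or : σ1 = 1 ∨ σ1 = -1 := by
      by_cases h : 0 < w₀.im <;> simp [hσ1def, h]
    have hσ2or : σ2 = 1 ∨ σ2 = -1 := by
      by_cases h : 0 < w₀.re <;> simp [hσ2def, h]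
    have hσ1pos : 0 < σ1 * w₀.im := by
      by_cases h : 0 < w₀.im
      · rw [hσ1def, if_pos h]; linarith
      · have h' : w₀.im < 0 := lt_of_le_of_ne (not_lt.mp h) hw₀im
        rw [hσ1def, if_neg h]; nlinarith
    have hσ2pos : 0 < σ2 * w₀.re := by
      by_cases h : 0 < w₀.re
      · rw [hσ2def, if_pos h]; linarith
      · have h' : w₀.re < 0 := lt_of_le_of_ne (not_lt.mp h) hw₀re
        rw [hσ2def, if_neg h]; nlinarith
    set P : ℝ := Real.sqrt (𝒜^2*w₀.im^2 - 4*a*(1-a)) with hPdef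
    set Q : ℝ := Real.sqrt (ℬ^2*(Complex.I*w₀).im^2 - 4*b*(1-b)) with hQdef
    have hQpos : 0 < Q := Real.sqrt_pos.mpr (by linarith)
    set Cc : ℂ := (((α + α') / 2 : ℝ) : ℂ) + Complex.I * (((β + β') / 2 : ℝ) : ℂ) with hCc
    have key : ∀ (vi sq : ℝ), sq = 1 ∨ sq = -1 → 0 < sq * (-vi * w₀.re) → vi ≠ 0 →
        L = Cc + (((σ1:ℝ):ℂ)*Complex.I*((P:ℝ):ℂ) + ((sq:ℝ):ℂ)*Complex.I*((Q:ℝ):ℂ))/(2*w₀) := by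
      intro vi sq hsqor hsq hvi
      set v : ℂ := 1 + (vi:ℝ)*Complex.I with hvdef
      have hvre : v.re = 1 := by simp [hvdef]
      have hvim : v.im = vi := by simp [hvdef]
      have Tp : Tendsto (fun ε : ℝ => (Dp (w₀ + v*(ε:ℂ))) ^ ((1:ℂ)/2))
          (nhdsWithin 0 (Ioi (0:ℝ))) (nhds (((σ1:ℝ):ℂ)*Complex.I*((P:ℝ):ℂ))) := by
        have h := dir_tendsto 𝒜 (1-2*a) (4*a*(1-a)) hdp w₀ v h1p h2p σ1 hσ1or
          (by rw [hvre]; simp only [one_mul]; exact hσ1pos)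
        refine h.congr fun ε => ?_
        rw [hDp]
      have Tq : Tendsto (fun ε : ℝ => (Dq (Complex.I*(w₀ + v*(ε:ℂ)))) ^ ((1:ℂ)/2))
          (nhdsWithin 0 (Ioi (0:ℝ))) (nhds (((sq:ℝ):ℂ)*Complex.I*((Q:ℝ):ℂ))) := by
        have hsgn : 0 < sq * ((Complex.I*v).re * (Complex.I*w₀).im) := by
          have hh1 : (Complex.I*v).re = -vi := by simp [hvdef]
          have hh2 : (Complex.I*w₀).im = w₀.re := by simp
          rw [hh1, hh2]; exact hsq
        have h := dir_tendsto ℬ (1-2*b) (4*b*(1-b)) hdq (Complex.I*w₀) (Complex.I*v)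
          h1q h2q sq hsqor hsgn
        refine h.congr fun ε => ?_
        rw [hDq]
        exact congrArg (· ^ ((1:ℂ)/2)) (by ring)
      have hWtend : Tendsto (fun ε : ℝ => w₀ + v*(ε:ℂ)) (nhdsWithin 0 (Ioi (0:ℝ))) (nhds w₀) := by
        have hc : Continuous (fun ε : ℝ => w₀ + v*(ε:ℂ)) :=
          continuous_const.add (continuous_const.mul Complex.continuous_ofReal)
        have := (hc.tendsto 0).mono_left (nhdsWithin_le_nhds (s := Ioi (0:ℝ)))
        simpa using this
      have hWmem : ∀ᶠ (ε : ℝ) in nhdsWithin 0 (Ioi (0:ℝ)), (w₀ + v*(ε:ℂ)) ∈ Ω := by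
        filter_upwards [hWtend.eventually_ne hw₀, self_mem_nhdsWithin] with ε hε0 (hεpos : 0 < ε)
        rw [hΩ]
        refine ⟨hε0, ?_, ?_⟩
        · intro hmem
          obtain ⟨hh1, _⟩ := (hmemIp _).mp hmem
          have hre1 : (w₀ + v*(ε:ℂ)).re = w₀.re + ε := by
            simp [Complex.add_re, Complex.mul_re, hvre]
          rw [hre1] at hh1
          have : 𝒜 * ε = 0 := by linear_combination hh1 - h1p
          exact absurd this (mul_ne_zero h𝒜ne hεpos.ne')
        · intro hmem
          obtain ⟨hh1, _⟩ := (hmemIq _).mp hmem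
          have hre2 : (Complex.I*(w₀ + v*(ε:ℂ))).re = -(w₀.im + vi*ε) := by
            simp [Complex.mul_re, Complex.add_im, Complex.mul_im, hvim]
          rw [hre2] at hh1
          have : ℬ * vi * ε = 0 := by linear_combination h1q' - hh1
          exact absurd this (mul_ne_zero (mul_ne_zero hℬne hvi) hεpos.ne')
      have hWΩ : Tendsto (fun ε : ℝ => w₀ + v*(ε:ℂ)) (nhdsWithin 0 (Ioi (0:ℝ)))
          (nhdsWithin w₀ Ω) := tendsto_nhdsWithin_iff.mpr ⟨hWtend, hWmem⟩
      have Tden : Tendsto (fun ε : ℝ => 2*(w₀ + v*(ε:ℂ))) (nhdsWithin 0 (Ioi (0:ℝ)))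
          (nhds (2*w₀)) := hWtend.const_mul 2
      have TBX : Tendsto (fun ε : ℝ => BX (w₀ + v*(ε:ℂ))) (nhdsWithin 0 (Ioi (0:ℝ)))
          (nhds (Cc + (((σ1:ℝ):ℂ)*Complex.I*((P:ℝ):ℂ) + ((sq:ℝ):ℂ)*Complex.I*((Q:ℝ):ℂ))/(2*w₀))) := by
        have h := Tendsto.add (tendsto_const_nhds (x := Cc)) ((Tp.add Tq).div Tden h2w)
        refine h.congr fun ε => ?_
        rw [hBX]
        simp only [Pi.div_apply]
      exact tendsto_nhds_unique (hL.comp hWΩ) TBX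
    have e1 : L = Cc + (((σ1:ℝ):ℂ)*Complex.I*((P:ℝ):ℂ) + (((-σ2:ℝ)):ℂ)*Complex.I*((Q:ℝ):ℂ))/(2*w₀) := by
      apply key 1 (-σ2)
      · rcases hσ2or with h | h
        · right; rw [h]
        · left; rw [h]; ring
      · have : (-σ2) * (-(1:ℝ) * w₀.re) = σ2 * w₀.re := by ring
        rw [this]; exact hσ2pos
      · norm_num
    have e2 : L = Cc + (((σ1:ℝ):ℂ)*Complex.I*((P:ℝ):ℂ) + ((σ2:ℝ):ℂ)*Complex.I*((Q:ℝ):ℂ))/(2*w₀) := by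
      apply key (-1) σ2 hσ2or
      · have : σ2 * (-(-1:ℝ) * w₀.re) = σ2 * w₀.re := by ring
        rw [this]; exact hσ2pos
      · norm_num
    have heq := e1.symm.trans e2
    have h' := add_left_cancel heq
    rw [div_eq_div_iff h2w h2w] at h'
    have hX := mul_right_cancel₀ h2w h'
    have hB := add_left_cancel hX
    have hQ0 : (Q:ℂ) = 0 := by
      have hσ2ne : (σ2:ℝ) ≠ 0 := by rcases hσ2or with h | h <;> rw [h] <;> norm_num
      have h2 : ((2*σ2:ℝ):ℂ) * Complex.I * (Q:ℂ) = 0 := by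
        push_cast at hB ⊢
        linear_combination -hB
      have h3 : ((2*σ2:ℝ):ℂ) ≠ 0 := by
        simp only [Ne, Complex.ofReal_eq_zero]
        intro h; apply hσ2ne; linarith
      have h4 := mul_eq_zero.mp h2
      rcases h4 with h4 | h4
      · rcases mul_eq_zero.mp h4 with h5 | h5
        · exact absurd h5 h3
        · exact absurd h5 Complex.I_ne_zero
      · exact h4
    rw [Complex.ofReal_eq_zero] at hQ0
    exact absurd hQ0 hQpos.ne'
  -- Part (3): limit at 0
  · have hDp0 : Dp 0 = 1 := by rw [hDp]; push_cast; ring_nf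
    have hDq0 : Dq 0 = 1 := by rw [hDq]; push_cast; ring_nf
    set Cc : ℂ := (((α + α') / 2 : ℝ) : ℂ) + Complex.I * (((β + β') / 2 : ℝ) : ℂ) with hCc
    have hGt : Tendsto (fun w : ℂ => w * Cc +
        ((Dp w) ^ ((1:ℂ)/2) + (Dq (Complex.I*w)) ^ ((1:ℂ)/2))/2) (nhds 0) (nhds 1) := by
      have h1 : ContinuousAt (fun w : ℂ => Dp w ^ ((1:ℂ)/2)) 0 :=
        ContinuousAt.comp (g := fun z : ℂ => z ^ ((1:ℂ)/2)) (f := Dp) (x := (0:ℂ))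
          (Complex.continuousAt_cpow_const_of_re_pos (by norm_num [hDp0]) hhalf)
          hDpc.continuousAt
      have h2 : ContinuousAt (fun w : ℂ => Dq (Complex.I*w) ^ ((1:ℂ)/2)) 0 := by
        have hin : ContinuousAt (fun w : ℂ => Dq (Complex.I * w)) 0 :=
          (hDqc.comp (by fun_prop : Continuous fun w : ℂ => Complex.I*w)).continuousAt
        exact ContinuousAt.comp (g := fun z : ℂ => z ^ ((1:ℂ)/2))
          (f := fun w : ℂ => Dq (Complex.I*w)) (x := (0:ℂ))
          (Complex.continuousAt_cpow_const_of_re_pos (by norm_num [hDq0]) hhalf) hin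
      have hct : ContinuousAt (fun w : ℂ => w * Cc +
          ((Dp w) ^ ((1:ℂ)/2) + (Dq (Complex.I*w)) ^ ((1:ℂ)/2))/2) 0 :=
        ((continuousAt_id.mul continuousAt_const).add ((h1.add h2).div_const 2))
      have hv := hct.tendsto
      have hval : (0:ℂ) * Cc + ((Dp 0) ^ ((1:ℂ)/2) + (Dq (Complex.I*0)) ^ ((1:ℂ)/2))/2 = 1 := by
        rw [show Complex.I*(0:ℂ) = 0 from mul_zero _, hDp0, hDq0, Complex.one_cpow]
        norm_num
      rwa [hval] at hv
    refine Tendsto.congr' ?_ (hGt.mono_left nhdsWithin_le_nhds)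
    filter_upwards [self_mem_nhdsWithin] with w hw
    rw [hΩ] at hw
    obtain ⟨hw0, -, -⟩ := hw
    rw [hBX w]
    field_simp
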